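/- For every n ∈ ℕ there is a linear isomorphic embedding T of the Lipschitz-free space F([0,1]ⁿ) into (C¹([0,1]ⁿ))*, defined on Dirac elements by T(δ_x)(f) = f(x); specifically, for μ = Σ α_i δ_{x_i}, one has (1/√n)·sup{|μ(f)| : ‖f‖¹_∞ ≤ 1, f(0)=0} ≤ ‖μ‖_{F([0,1]ⁿ)} ≤ √n·sup{|μ(f)| : ‖f‖¹_∞ ≤ 1, f(0)=0}. -/

import Mathlib

open Metric Set
open scoped NNReal ENNReal

/-- The space of real-valued Lipschitz functions on `M` vanishing at the base point `z`. -/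
structure Lip0 {M : Type*} [MetricSpace M] (z : M) where
  toFun : M → ℝ
  lipschitz' : ∃ K : ℝ≥0, LipschitzWith K toFun
  map_base' : toFun z = 0

namespace Lip0

variable {M : Type*} [MetricSpace M] {z : M}

instance : FunLike (Lip0 z) M ℝ where
  coe := Lip0.toFun
  coe_injective := by rintro ⟨f, _, _⟩ ⟨g, _, _⟩ h; simpa using h

@[simp] lemma coe_mk (f : M → ℝ) (h1 h2) : ⇑(⟨f, h1, h2⟩ : Lip0 z) = f := rfl

lemma map_base (f : Lip0 z) : f z = 0 := f.map_base'

instance : Zero (Lip0 z) := ⟨⟨0, ⟨0, LipschitzWith.const (0 : ℝ)⟩, rfl⟩⟩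

instance : Add (Lip0 z) :=
  ⟨fun f g => ⟨⇑f + ⇑g,
    ⟨f.lipschitz'.choose + g.lipschitz'.choose,
      f.lipschitz'.choose_spec.add g.lipschitz'.choose_spec⟩,
    by simp [map_base f, map_base g]⟩⟩

instance : Neg (Lip0 z) :=
  ⟨fun f => ⟨-⇑f, ⟨f.lipschitz'.choose, f.lipschitz'.choose_spec.neg⟩,
    by simp [map_base f]⟩⟩

lemma lip_const_smul {f : M → ℝ} {K : ℝ≥0} (h : LipschitzWith K f) (c : ℝ) :
    LipschitzWith (‖c‖₊ * K) (c • f) := by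
  rw [lipschitzWith_iff_dist_le_mul] at h ⊢
  intro x y
  calc dist ((c • f) x) ((c • f) y) = ‖c‖ * dist (f x) (f y) := by
        rw [Pi.smul_apply, Pi.smul_apply, dist_smul₀]
    _ ≤ ‖c‖ * (K * dist x y) := by
        apply mul_le_mul_of_nonneg_left (h x y) (norm_nonneg c)
    _ = (‖c‖₊ * K : ℝ≥0) * dist x y := by push_cast; ring

instance : SMul ℝ (Lip0 z) :=
  ⟨fun c f => ⟨c • ⇑f,
    ⟨‖c‖₊ * f.lipschitz'.choose, lip_const_smul f.lipschitz'.choose_spec c⟩,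
    by simp [map_base f]⟩⟩

instance : Sub (Lip0 z) := ⟨fun f g => f + -g⟩
instance : SMul ℕ (Lip0 z) := ⟨fun n f => (n : ℝ) • f⟩
instance : SMul ℤ (Lip0 z) := ⟨fun n f => (n : ℝ) • f⟩

@[simp] lemma coe_zero : ⇑(0 : Lip0 z) = 0 := rfl
@[simp] lemma coe_add (f g : Lip0 z) : ⇑(f + g) = ⇑f + ⇑g := rfl
@[simp] lemma coe_neg (f : Lip0 z) : ⇑(-f) = -⇑f := rfl
@[simp] lemma coe_smul (c : ℝ) (f : Lip0 z) : ⇑(c • f) = c • ⇑f := rfl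
@[simp] lemma coe_sub (f g : Lip0 z) : ⇑(f - g) = ⇑f - ⇑g := by
  show ⇑(f + -g) = _; ext x; simp [sub_eq_add_neg]

instance : AddCommGroup (Lip0 z) :=
  DFunLike.coe_injective.addCommGroup _ coe_zero coe_add coe_neg coe_sub
    (fun f n => by show ⇑((n : ℝ) • f) = _; ext x; simp)
    (fun f n => by show ⇑((n : ℝ) • f) = _; ext x; simp)

instance : Module ℝ (Lip0 z) := by
  refine Function.Injective.module ℝ (AddMonoidHom.mk' (fun (f : Lip0 z) => ⇑f) coe_add) ?_ ?_
  · exact DFunLike.coe_injective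
  · exact coe_smul

/-- The least Lipschitz constant. -/
noncomputable def lipConst (f : M → ℝ) : ℝ≥0 := sInf {K : ℝ≥0 | LipschitzWith K f}

lemma lipschitzWith_lipConst {f : M → ℝ} (h : ∃ K : ℝ≥0, LipschitzWith K f) :
    LipschitzWith (lipConst f) f := by
  rw [lipschitzWith_iff_dist_le_mul]
  intro x y
  rcases eq_or_ne x y with rfl | hxy
  · simp
  have hd : 0 < dist x y := dist_pos.2 hxy
  have h1 : Real.toNNReal (dist (f x) (f y) / dist x y) ≤ lipConst f := by
    apply le_csInf h
    intro K hK
    rw [← NNReal.coe_le_coe, Real.coe_toNNReal _ (by positivity)]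
    have hK' := lipschitzWith_iff_dist_le_mul.1 hK
    exact (div_le_iff₀ hd).2 (by simpa [mul_comm] using hK' x y)
  rw [← NNReal.coe_le_coe, Real.coe_toNNReal _ (by positivity)] at h1
  calc dist (f x) (f y) = dist (f x) (f y) / dist x y * dist x y := by field_simp
    _ ≤ (lipConst f : ℝ) * dist x y := by
        apply mul_le_mul_of_nonneg_right _ hd.le
        exact h1



lemma lipConst_le {f : M → ℝ} {K : ℝ≥0} (h : LipschitzWith K f) : lipConst f ≤ K :=
  csInf_le (OrderBot.bddBelow _) h

lemma dist_le_lipConst (f : Lip0 z) (x y : M) :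
    dist (f x) (f y) ≤ (lipConst ⇑f : ℝ) * dist x y :=
  lipschitzWith_iff_dist_le_mul.1 (lipschitzWith_lipConst f.lipschitz') x y

noncomputable instance : Norm (Lip0 z) := ⟨fun f => (lipConst ⇑f : ℝ)⟩

lemma norm_def (f : Lip0 z) : ‖f‖ = (lipConst ⇑f : ℝ) := rfl

lemma eq_zero_of_lipConst_eq_zero (f : Lip0 z) (h : lipConst ⇑f = 0) : f = 0 := by
  apply DFunLike.coe_injective
  ext x
  have h2 := dist_le_lipConst f x z
  rw [h, map_base f] at h2
  simp only [NNReal.coe_zero, zero_mul] at h2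
  have := dist_nonneg (x := f x) (y := (0:ℝ))
  simp only [coe_zero, Pi.zero_apply]
  have : dist (f x) (0:ℝ) = 0 := le_antisymm h2 dist_nonneg
  simpa [dist_eq_norm] using this

lemma lipConst_smul (c : ℝ) (f : Lip0 z) : lipConst ⇑(c • f) = ‖c‖₊ * lipConst ⇑f := by
  have le1 : ∀ (c : ℝ) (f : Lip0 z), lipConst ⇑(c • f) ≤ ‖c‖₊ * lipConst ⇑f := by
    intro c f
    exact lipConst_le (lip_const_smul (lipschitzWith_lipConst f.lipschitz') c)
  rcases eq_or_ne c 0 with rfl | hc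
  · simp only [nnnorm_zero, zero_mul]
    refine le_antisymm ?_ zero_le
    have : (0:ℝ) • f = (0 : Lip0 z) := zero_smul ℝ f
    calc lipConst ⇑((0:ℝ) • f) ≤ ‖(0:ℝ)‖₊ * lipConst ⇑f := le1 0 f
      _ = 0 := by simp
  · refine le_antisymm (le1 c f) ?_
    have h2 := le1 c⁻¹ (c • f)
    rw [inv_smul_smul₀ hc] at h2
    have hcpos : (0:ℝ≥0) < ‖c‖₊ := by simpa using hc
    calc ‖c‖₊ * lipConst ⇑f ≤ ‖c‖₊ * (‖c⁻¹‖₊ * lipConst ⇑(c • f)) := by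
          exact mul_le_mul_of_nonneg_left h2 zero_le
      _ = lipConst ⇑(c • f) := by
          rw [← mul_assoc]
          have : ‖c‖₊ * ‖c⁻¹‖₊ = 1 := by
            rw [← nnnorm_mul, mul_inv_cancel₀ hc, nnnorm_one]
          rw [this, one_mul]

noncomputable def addGroupNorm (z : M) : AddGroupNorm (Lip0 z) where
  toFun f := (lipConst ⇑f : ℝ)
  map_zero' := by
    simp only [coe_zero]
    norm_cast
    exact le_antisymm (lipConst_le (LipschitzWith.const' (0:ℝ))) zero_le
  add_le' f g := by
    push_cast
    have : lipConst ⇑(f + g) ≤ lipConst ⇑f + lipConst ⇑g := by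
      refine lipConst_le ?_
      exact (lipschitzWith_lipConst f.lipschitz').add (lipschitzWith_lipConst g.lipschitz')
    exact_mod_cast this
  neg' f := by
    have h : (-⇑f : M → ℝ) = ⇑((-1 : ℝ) • f) := by ext x; simp
    show (lipConst ⇑(-f) : ℝ) = (lipConst ⇑f : ℝ)
    rw [coe_neg, h, lipConst_smul]
    simp
  eq_zero_of_map_eq_zero' f h := by
    apply eq_zero_of_lipConst_eq_zero
    have h' : (lipConst ⇑f : ℝ) = 0 := h
    exact_mod_cast h'

noncomputable instance : NormedAddCommGroup (Lip0 z) :=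
  (addGroupNorm z).toNormedAddCommGroup

noncomputable instance : NormedSpace ℝ (Lip0 z) where
  norm_smul_le c f := by
    show (lipConst ⇑(c • f) : ℝ) ≤ ‖c‖ * (lipConst ⇑f : ℝ)
    rw [lipConst_smul]
    push_cast
    simp [Real.norm_eq_abs]

end Lip0

section FreeSpace

variable {M : Type*} [MetricSpace M]

/-- The evaluation functional `δ_x ∈ Lip_0(M)^*`. -/
noncomputable def dirac (z x : M) : StrongDual ℝ (Lip0 z) :=
  LinearMap.mkContinuous
    { toFun := fun f => f x
      map_add' := by intro f g; simp
      map_smul' := by intro c f; simp }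
    (dist x z)
    (by
      intro f
      have := Lip0.dist_le_lipConst f x z
      rw [Lip0.map_base f, dist_zero_right] at this
      change _ ≤ dist x z * (Lip0.lipConst ⇑f : ℝ)
      simpa [mul_comm] using this)

@[simp] lemma dirac_apply (z x : M) (f : Lip0 z) : dirac z x f = f x := rfl

/-- The Lipschitz-free space over `M` with base point `z`: the closed linear span of
the evaluation functionals inside `Lip_0(M)^*`. -/
noncomputable def FreeSpace (z : M) : Submodule ℝ (StrongDual ℝ (Lip0 z)) :=
  (Submodule.span ℝ (Set.range (dirac z))).topologicalClosure

/-- The canonical embedding `δ : M → F(M)`. -/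
noncomputable def diracF (z x : M) : FreeSpace z :=
  ⟨dirac z x, Submodule.le_topologicalClosure _ (Submodule.subset_span ⟨x, rfl⟩)⟩

end FreeSpace


section AuxLemmas

open MeasureTheory
open scoped Convolution

lemma sum_abs_le_sqrt_mul_norm (n : ℕ) (v : EuclideanSpace ℝ (Fin n)) :
    ∑ i, |v i| ≤ Real.sqrt n * ‖v‖ := by
  have h1 : (∑ i, |v i|) ^ 2 ≤ (n : ℝ) * ∑ i, |v i| ^ 2 := by
    simpa using sq_sum_le_card_mul_sum_sq (s := Finset.univ) (f := fun i => |v i|)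
  have h2 : ‖v‖ = Real.sqrt (∑ i, |v i| ^ 2) := by
    rw [EuclideanSpace.norm_eq]; simp [Real.norm_eq_abs]
  have h3 : (0:ℝ) ≤ ∑ i, |v i| := Finset.sum_nonneg fun i _ => abs_nonneg _
  calc ∑ i, |v i| = Real.sqrt ((∑ i, |v i|) ^ 2) := by rw [Real.sqrt_sq h3]
    _ ≤ Real.sqrt ((n : ℝ) * ∑ i, |v i| ^ 2) := Real.sqrt_le_sqrt h1
    _ = Real.sqrt n * ‖v‖ := by rw [Real.sqrt_mul (by positivity), h2]

lemma euclid_decomp (n : ℕ) (v : EuclideanSpace ℝ (Fin n)) :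
    v = ∑ i, v i • EuclideanSpace.single i (1:ℝ) := by
  have := (EuclideanSpace.basisFun (Fin n) ℝ).sum_repr v
  simp only [EuclideanSpace.basisFun_repr, EuclideanSpace.basisFun_apply] at this
  exact this.symm

lemma opNorm_le_sqrt (n : ℕ) (L : EuclideanSpace ℝ (Fin n) →L[ℝ] ℝ)
    (h : ∀ i, |L (EuclideanSpace.single i 1)| ≤ 1) : ‖L‖ ≤ Real.sqrt n := by
  refine L.opNorm_le_bound (Real.sqrt_nonneg n) fun v => ?_
  have hLv : L v = ∑ i, v i * L (EuclideanSpace.single i 1) := by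
    conv_lhs => rw [euclid_decomp n v]
    rw [map_sum]
    simp [smul_eq_mul]
  rw [Real.norm_eq_abs, hLv]
  calc |∑ i, v i * L (EuclideanSpace.single i 1)| ≤ ∑ i, |v i * L (EuclideanSpace.single i 1)| :=
        Finset.abs_sum_le_sum_abs _ _
    _ ≤ ∑ i, |v i| := by
        refine Finset.sum_le_sum fun i _ => ?_
        rw [abs_mul]
        exact mul_le_of_le_one_right (abs_nonneg _) (h i)
    _ ≤ Real.sqrt n * ‖v‖ := sum_abs_le_sqrt_mul_norm n v

lemma lipschitzWith_sub_const {E : Type*} [PseudoMetricSpace E] {K : ℝ≥0} {f : E → ℝ}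
    (hf : LipschitzWith K f) (c : ℝ) : LipschitzWith K (fun p => f p - c) := by
  rw [lipschitzWith_iff_dist_le_mul] at hf ⊢
  intro p q
  simpa [Real.dist_eq] using hf p q

lemma exists_smooth_approx (n : ℕ) (G : EuclideanSpace ℝ (Fin n) → ℝ) (K : ℝ≥0)
    (hG : LipschitzWith K G) {δ : ℝ} (hδ : 0 < δ) :
    ∃ f : EuclideanSpace ℝ (Fin n) → ℝ, ContDiff ℝ 1 f ∧ LipschitzWith K f ∧
      ∀ p, |f p - G p| ≤ K * δ := by
  let φ : ContDiffBump (0 : EuclideanSpace ℝ (Fin n)) := ⟨δ/2, δ, by positivity, by linarith⟩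
  have hr : φ.rOut = δ := rfl
  set ψ : EuclideanSpace ℝ (Fin n) → ℝ := φ.normed volume with hψ
  have hGc : Continuous G := hG.continuous
  have hGli : LocallyIntegrable G volume := hGc.locallyIntegrable
  set f : EuclideanSpace ℝ (Fin n) → ℝ := ψ ⋆[ContinuousLinearMap.lsmul ℝ ℝ, volume] G with hf
  have hsmooth : ContDiff ℝ 1 f :=
    HasCompactSupport.contDiff_convolution_left _ φ.hasCompactSupport_normed
      φ.contDiff_normed hGli
  have hex : ConvolutionExists ψ G (ContinuousLinearMap.lsmul ℝ ℝ) volume :=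
    HasCompactSupport.convolutionExists_left _ φ.hasCompactSupport_normed
      φ.continuous_normed hGli
  have hlip : LipschitzWith K f := by
    rw [lipschitzWith_iff_dist_le_mul]
    intro p q
    have h1 := hex p
    have h2 := hex q
    have key : f p - f q = ∫ t, ψ t • (G (p - t) - G (q - t)) := by
      rw [hf, convolution_def, convolution_def, ← integral_sub h1 h2]
      congr 1
      ext t
      simp only [ContinuousLinearMap.lsmul_apply, smul_eq_mul]
      ring
    rw [Real.dist_eq, key]
    have hbound : ∀ t, ‖ψ t • (G (p - t) - G (q - t))‖ ≤ ψ t * ((K : ℝ) * dist p q) := by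
      intro t
      rw [norm_smul, Real.norm_eq_abs (ψ t), abs_of_nonneg (φ.nonneg_normed t)]
      refine mul_le_mul_of_nonneg_left ?_ (φ.nonneg_normed t)
      have h3 := hG.dist_le_mul (p - t) (q - t)
      have h4 : dist (p - t) (q - t) = dist p q := by
        simp [dist_eq_norm]
      rw [h4] at h3
      simpa [Real.dist_eq] using h3
    have hintmaj : Integrable (fun t => ψ t * ((K : ℝ) * dist p q)) volume :=
      φ.integrable_normed.mul_const _
    rw [← Real.norm_eq_abs]
    calc ‖∫ t, ψ t • (G (p - t) - G (q - t))‖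
        ≤ ∫ t, ψ t * ((K : ℝ) * dist p q) :=
          norm_integral_le_of_norm_le hintmaj (Filter.Eventually.of_forall hbound)
      _ = (K : ℝ) * dist p q := by
          rw [integral_mul_const, φ.integral_normed]
          ring
  refine ⟨f, hsmooth, hlip, fun p => ?_⟩
  have hh : dist (f p) (G p) ≤ (K : ℝ) * δ := by
    refine ContDiffBump.dist_normed_convolution_le hGc.aestronglyMeasurable ?_
    intro y hy
    rw [hr] at hy
    calc dist (G y) (G p) ≤ K * dist y p := hG.dist_le_mul y p
      _ ≤ K * δ := mul_le_mul_of_nonneg_left (le_of_lt (mem_ball.mp hy)) K.coe_nonneg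
  simpa [Real.dist_eq] using hh

end AuxLemmas

section Statement18

variable (n : ℕ)

/-- The unit cube `[0,1]ⁿ`. -/
def unitCube : Set (EuclideanSpace ℝ (Fin n)) := {p | ∀ i, p i ∈ Set.Icc (0 : ℝ) 1}

lemma zero_mem_unitCube : (0 : EuclideanSpace ℝ (Fin n)) ∈ unitCube n :=
  fun i => by simp [Set.mem_Icc]

/-- The base point of `F([0,1]ⁿ)`. -/
noncomputable def cubeBase : unitCube n := ⟨0, zero_mem_unitCube n⟩

/-- The unit ball, for values and partial derivatives on the cube, of the space
`C¹([0,1]ⁿ)`, intersected with `{f : f(0) = 0}` (working with globally `C¹` functions). -/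
def c1UnitBall : Set (EuclideanSpace ℝ (Fin n) → ℝ) :=
  {f | ContDiff ℝ 1 f ∧ f 0 = 0 ∧
    ∀ p ∈ unitCube n, |f p| ≤ 1 ∧ ∀ i, |fderiv ℝ f p (EuclideanSpace.single i 1)| ≤ 1}


lemma convex_unitCube : Convex ℝ (unitCube n) := by
  intro p hp q hq a b ha hb hab i
  have h : (a • p + b • q) i = a * p i + b * q i := rfl
  have := (convex_Icc (0:ℝ) 1) (hp i) (hq i) ha hb hab
  simpa [h, smul_eq_mul] using this

set_option maxHeartbeats 2000000

lemma norm_le_sqrt_of_mem_cube {p : EuclideanSpace ℝ (Fin n)} (hp : p ∈ unitCube n) :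
    ‖p‖ ≤ Real.sqrt n := by
  rw [EuclideanSpace.norm_eq]
  have h : ∑ i, ‖p i‖ ^ 2 ≤ (n : ℝ) := by
    calc ∑ i, ‖p i‖ ^ 2 ≤ ∑ _i : Fin n, (1:ℝ) := by
          refine Finset.sum_le_sum fun i _ => ?_
          have h1 := (hp i).1
          have h2 := (hp i).2
          rw [Real.norm_eq_abs, abs_of_nonneg h1]
          nlinarith
      _ = (n : ℝ) := by simp
  exact Real.sqrt_le_sqrt h

/-- on the span of the Diracs, the free-space norm of `μ = Σ αᵢ δ_{xᵢ}` is
equivalent, with constants `√n`, to `sup {|μ(f)| : ‖f‖¹_∞ ≤ 1, f(0) = 0}`; this yields a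
linear isomorphic embedding of `F([0,1]ⁿ)` into `(C¹([0,1]ⁿ))^*` via `T(δ_x)(f) = f(x)`. -/
theorem freeSpace_embeds_in_C1_dual (k : ℕ) (α : Fin k → ℝ) (x : Fin k → unitCube n) :
    (1 / Real.sqrt n) *
        sSup {r : ℝ | ∃ f ∈ c1UnitBall n,
          r = |∑ i, α i * f ((x i : EuclideanSpace ℝ (Fin n)))|} ≤
      ‖∑ i, α i • diracF (cubeBase n) (x i)‖ ∧
    ‖∑ i, α i • diracF (cubeBase n) (x i)‖ ≤
      Real.sqrt n *
        sSup {r : ℝ | ∃ f ∈ c1UnitBall n,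
          r = |∑ i, α i * f ((x i : EuclideanSpace ℝ (Fin n)))|} := by
  classical
  set z := cubeBase n with hz
  set S := {r : ℝ | ∃ f ∈ c1UnitBall n,
      r = |∑ i, α i * f ((x i : EuclideanSpace ℝ (Fin n)))|} with hSdef
  set μ : FreeSpace z := ∑ i, α i • diracF z (x i) with hμ
  set μ' : StrongDual ℝ (Lip0 z) := ∑ i, α i • dirac z (x i) with hμ'
  have hcoe : (μ : StrongDual ℝ (Lip0 z)) = μ' := by
    rw [hμ, hμ']
    rw [AddSubmonoidClass.coe_finset_sum]
    rfl
  have hnorm : ‖μ‖ = ‖μ'‖ := by rw [← hcoe]; rfl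
  have happ : ∀ g : Lip0 z, μ' g = ∑ i, α i * g (x i) := by
    intro g
    rw [hμ']
    simp [ContinuousLinearMap.sum_apply, smul_eq_mul]
  -- S contains 0 and is bounded above
  have hS0 : (0:ℝ) ∈ S := by
    refine ⟨fun _ => 0, ⟨contDiff_const, rfl, fun p _ => ⟨by simp, fun i => by simp⟩⟩, by simp⟩
  have hSbdd : BddAbove S := by
    refine ⟨∑ i, |α i|, fun r hr => ?_⟩
    obtain ⟨f, hf, rfl⟩ := hr
    calc |∑ i, α i * f (x i : EuclideanSpace ℝ (Fin n))|
        ≤ ∑ i, |α i * f (x i : EuclideanSpace ℝ (Fin n))| := Finset.abs_sum_le_sum_abs _ _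
      _ ≤ ∑ i, |α i| := by
          refine Finset.sum_le_sum fun i _ => ?_
          rw [abs_mul]
          exact mul_le_of_le_one_right (abs_nonneg _) ((hf.2.2 _ (x i).2).1)
  have hSnn : 0 ≤ sSup S := le_csSup hSbdd hS0
  -- each element of S is ≤ √n * ‖μ‖
  have key1 : ∀ r ∈ S, r ≤ Real.sqrt n * ‖μ‖ := by
    rintro r ⟨f, hf, rfl⟩
    have hdiff : ∀ p, DifferentiableAt ℝ f p := fun p =>
      (hf.1.differentiable one_ne_zero).differentiableAt
    have hder : ∀ p ∈ unitCube n, ‖fderiv ℝ f p‖ ≤ Real.sqrt n := fun p hp =>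
      opNorm_le_sqrt n _ fun i => (hf.2.2 p hp).2 i
    have hlips : LipschitzWith ⟨Real.sqrt n, Real.sqrt_nonneg n⟩
        (fun p : unitCube n => f ↑p) := by
      apply LipschitzWith.of_dist_le_mul
      intro p q
      have := Convex.norm_image_sub_le_of_norm_fderiv_le (fun y _ => hdiff y) hder
        (convex_unitCube n) q.2 p.2
      exact (by simpa [Real.dist_eq, Subtype.dist_eq, dist_eq_norm] using this :
        dist (f ↑p) (f ↑q) ≤ Real.sqrt n * dist p q)
    set g : Lip0 z := ⟨fun p => f ↑p, ⟨_, hlips⟩, hf.2.1⟩ with hg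
    have hgnorm : ‖g‖ ≤ Real.sqrt n := by
      rw [Lip0.norm_def]
      exact NNReal.coe_le_coe.2 (Lip0.lipConst_le (f := g) hlips)
    have h1 : |μ' g| ≤ ‖μ'‖ * ‖g‖ := by
      have := μ'.le_opNorm g; rw [Real.norm_eq_abs] at this; exact this
    have h2 : μ' g = ∑ i, α i * f ((x i : EuclideanSpace ℝ (Fin n))) := happ g
    calc |∑ i, α i * f ((x i : EuclideanSpace ℝ (Fin n)))| = |μ' g| := by rw [h2]
      _ ≤ ‖μ'‖ * ‖g‖ := h1
      _ ≤ ‖μ'‖ * Real.sqrt n := mul_le_mul_of_nonneg_left hgnorm (norm_nonneg _)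
      _ = Real.sqrt n * ‖μ‖ := by rw [hnorm]; ring
  have hsup_le : sSup S ≤ Real.sqrt n * ‖μ‖ :=
    Real.sSup_le key1 (mul_nonneg (Real.sqrt_nonneg n) (by positivity))
  constructor
  · -- lower bound
    rcases Nat.eq_zero_or_pos n with hn | hn
    · subst hn
      simp only [Nat.cast_zero, Real.sqrt_zero, div_zero, zero_mul]
      positivity
    · have hpos : 0 < Real.sqrt n := Real.sqrt_pos.2 (by exact_mod_cast hn)
      rw [div_mul_eq_mul_div, one_mul, div_le_iff₀ hpos]
      calc sSup S ≤ Real.sqrt n * ‖μ‖ := hsup_le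
        _ = ‖μ‖ * Real.sqrt n := by ring
  · -- upper bound
    rcases Nat.eq_zero_or_pos n with hn | hn
    · subst hn
      rw [hnorm]
      simp only [Nat.cast_zero, Real.sqrt_zero, zero_mul]
      refine ContinuousLinearMap.opNorm_le_bound _ le_rfl fun g => ?_
      have hval : ∀ i, g (x i) = 0 := by
        intro i
        have : x i = z := Subsingleton.elim _ _
        rw [this]
        exact Lip0.map_base g
      rw [happ g]
      simp [hval]
    · have hsq1 : 1 ≤ Real.sqrt n := by
        rw [show (1:ℝ) = Real.sqrt 1 by simp]
        exact Real.sqrt_le_sqrt (by exact_mod_cast hn)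
      rw [hnorm]
      refine ContinuousLinearMap.opNorm_le_bound _
        (mul_nonneg (Real.sqrt_nonneg n) hSnn) fun g => ?_
      set K := Lip0.lipConst ⇑g with hKdef
      have hgnorm : ‖g‖ = (K : ℝ) := rfl
      by_cases hK : K = 0
      · have hg0 : g = 0 := Lip0.eq_zero_of_lipConst_eq_zero g hK
        subst hg0
        rw [happ]
        simp [mul_nonneg (mul_nonneg (Real.sqrt_nonneg n) hSnn) (norm_nonneg _)]
      · have hKpos : (0:ℝ) < K := by positivity
        -- extend g to a K-Lipschitz function on all of ℝⁿ
        set g₀ : EuclideanSpace ℝ (Fin n) → ℝ :=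
          fun p => if h : p ∈ unitCube n then g ⟨p, h⟩ else 0 with hg₀
        have hgon : LipschitzOnWith K g₀ (unitCube n) := by
          rw [lipschitzOnWith_iff_dist_le_mul]
          intro p hp q hq
          rw [hg₀]
          simp only [dif_pos hp, dif_pos hq]
          have h1 := Lip0.dist_le_lipConst g ⟨p, hp⟩ ⟨q, hq⟩
          rwa [Subtype.dist_eq] at h1
        obtain ⟨G, hGlip, hGeq⟩ := hgon.extend_real
        have hGp : ∀ (p : EuclideanSpace ℝ (Fin n)) (hp : p ∈ unitCube n),
            G p = g ⟨p, hp⟩ := by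
          intro p hp
          rw [← hGeq hp, hg₀]
          simp [dif_pos hp]
        have hG0 : G 0 = 0 := by
          rw [hGp 0 (zero_mem_unitCube n)]
          exact Lip0.map_base g
        rw [happ g, Real.norm_eq_abs]
        change |∑ i, α i * g (x i)| ≤ Real.sqrt n * sSup S * (K : ℝ)
        refine le_of_forall_pos_le_add fun ε hε => ?_
        set A := ∑ i, |α i| with hAdef
        have hA : 0 ≤ A := Finset.sum_nonneg fun i _ => abs_nonneg _
        set D := 2 * (K : ℝ) * (sSup S + A) with hDdef
        have hD : 0 ≤ D := by positivity
        set δ := ε / (D + 1) with hδdef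
        have hδpos : 0 < δ := by positivity
        obtain ⟨f, hfc, hflip, hfapprox⟩ := exists_smooth_approx n G K hGlip hδpos
        set f' : EuclideanSpace ℝ (Fin n) → ℝ := fun p => f p - f 0 with hf'
        have hf'c : ContDiff ℝ 1 f' := hfc.sub contDiff_const
        have hf'lip : LipschitzWith K f' := lipschitzWith_sub_const hflip (f 0)
        have hf'0 : f' 0 = 0 := sub_self _
        have hf'approx : ∀ p, |f' p - G p| ≤ 2 * ((K : ℝ) * δ) := by
          intro p
          have h1 := hfapprox p
          have h2 := hfapprox 0
          rw [hG0, sub_zero] at h2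
          have : f' p - G p = (f p - G p) - f 0 := by rw [hf']; ring
          rw [this]
          calc |f p - G p - f 0| ≤ |f p - G p| + |f 0| := abs_sub _ _
            _ ≤ (K : ℝ) * δ + (K : ℝ) * δ := add_le_add h1 h2
            _ = 2 * ((K : ℝ) * δ) := by ring
        set c := (K : ℝ) * Real.sqrt n + 2 * ((K : ℝ) * δ) with hcdef
        have hcpos : 0 < c := by positivity
        have hKlec : (K : ℝ) ≤ c := by
          have : (K : ℝ) * 1 ≤ (K : ℝ) * Real.sqrt n :=
            mul_le_mul_of_nonneg_left hsq1 hKpos.le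
          nlinarith
        have hcube_bound : ∀ p ∈ unitCube n, |f' p| ≤ c := by
          intro p hp
          have hGb : |G p| ≤ (K : ℝ) * Real.sqrt n := by
            have h1 := hGlip.dist_le_mul p 0
            rw [Real.dist_eq, hG0, sub_zero, dist_zero_right] at h1
            calc |G p| ≤ (K : ℝ) * ‖p‖ := h1
              _ ≤ (K : ℝ) * Real.sqrt n :=
                mul_le_mul_of_nonneg_left (norm_le_sqrt_of_mem_cube n hp) hKpos.le
          calc |f' p| = |(f' p - G p) + G p| := by ring_nf
            _ ≤ |f' p - G p| + |G p| := abs_add_le _ _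
            _ ≤ 2 * ((K : ℝ) * δ) + (K : ℝ) * Real.sqrt n :=
                add_le_add (hf'approx p) hGb
            _ = c := by rw [hcdef]; ring
        have hderiv_bound : ∀ p, ‖fderiv ℝ f' p‖ ≤ (K : ℝ) := fun p =>
          norm_fderiv_le_of_lipschitz ℝ hf'lip
        set F : EuclideanSpace ℝ (Fin n) → ℝ := fun p => c⁻¹ * f' p with hFdef
        have hFball : F ∈ c1UnitBall n := by
          refine ⟨contDiff_const.mul hf'c, by simp [hFdef, hf'0], fun p hp => ⟨?_, ?_⟩⟩
          · rw [hFdef]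
            simp only [abs_mul, abs_inv, abs_of_pos hcpos]
            rw [inv_mul_le_iff₀ hcpos, mul_one]
            exact hcube_bound p hp
          · intro i
            have hFs : F = c⁻¹ • f' := by
              funext q; simp [hFdef, smul_eq_mul]
            have hfd : fderiv ℝ F p = c⁻¹ • fderiv ℝ f' p := by
              rw [hFs]
              exact fderiv_const_smul ((hf'c.differentiable one_ne_zero).differentiableAt) c⁻¹
            rw [hfd]
            simp only [ContinuousLinearMap.smul_apply, smul_eq_mul, abs_mul, abs_inv,
              abs_of_pos hcpos]
            rw [inv_mul_le_iff₀ hcpos, mul_one]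
            calc |(fderiv ℝ f' p) (EuclideanSpace.single i 1)|
                ≤ ‖fderiv ℝ f' p‖ * ‖EuclideanSpace.single i (1:ℝ)‖ := by
                  rw [← Real.norm_eq_abs]
                  exact (fderiv ℝ f' p).le_opNorm _
              _ ≤ (K : ℝ) := by
                  rw [EuclideanSpace.norm_single]
                  simpa using hderiv_bound p
              _ ≤ c := hKlec
        have hrle : |∑ i, α i * F ((x i : EuclideanSpace ℝ (Fin n)))| ≤ sSup S :=
          le_csSup hSbdd ⟨F, hFball, rfl⟩
        have hsum_eq : ∑ i, α i * f' ((x i : EuclideanSpace ℝ (Fin n)))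
            = c * ∑ i, α i * F ((x i : EuclideanSpace ℝ (Fin n))) := by
          rw [Finset.mul_sum]
          refine Finset.sum_congr rfl fun i _ => ?_
          rw [hFdef]
          field_simp
        have hstep1 : |∑ i, α i * g (x i)|
            ≤ |∑ i, α i * f' ((x i : EuclideanSpace ℝ (Fin n)))| + A * (2 * ((K : ℝ) * δ)) := by
          have hdiffsum : ∑ i, α i * g (x i)
              = (∑ i, α i * f' ((x i : EuclideanSpace ℝ (Fin n))))
                + ∑ i, α i * (g (x i) - f' ((x i : EuclideanSpace ℝ (Fin n)))) := by
            rw [← Finset.sum_add_distrib]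
            refine Finset.sum_congr rfl fun i _ => by ring
          rw [hdiffsum]
          refine (abs_add_le _ _).trans (add_le_add_right ?_ _)
          calc |∑ i, α i * (g (x i) - f' ((x i : EuclideanSpace ℝ (Fin n))))|
              ≤ ∑ i, |α i * (g (x i) - f' ((x i : EuclideanSpace ℝ (Fin n))))| :=
                Finset.abs_sum_le_sum_abs _ _
            _ ≤ ∑ i, |α i| * (2 * ((K : ℝ) * δ)) := by
                refine Finset.sum_le_sum fun i _ => ?_
                rw [abs_mul]
                refine mul_le_mul_of_nonneg_left ?_ (abs_nonneg _)
                have := hf'approx ((x i : EuclideanSpace ℝ (Fin n)))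
                rw [hGp _ (x i).2] at this
                have hxi : (⟨(x i : EuclideanSpace ℝ (Fin n)), (x i).2⟩ : unitCube n) = x i :=
                  Subtype.ext rfl
                rw [hxi] at this
                calc |g (x i) - f' ((x i : EuclideanSpace ℝ (Fin n)))|
                    = |f' ((x i : EuclideanSpace ℝ (Fin n))) - g (x i)| := abs_sub_comm _ _
                  _ ≤ 2 * ((K : ℝ) * δ) := this
            _ = A * (2 * ((K : ℝ) * δ)) := by rw [hAdef, ← Finset.sum_mul]
        have hfinal : |∑ i, α i * g (x i)| ≤ Real.sqrt n * sSup S * (K : ℝ) + δ * D := by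
          calc |∑ i, α i * g (x i)|
              ≤ |∑ i, α i * f' ((x i : EuclideanSpace ℝ (Fin n)))| + A * (2 * ((K : ℝ) * δ)) :=
                hstep1
            _ = c * |∑ i, α i * F ((x i : EuclideanSpace ℝ (Fin n)))| + A * (2 * ((K : ℝ) * δ)) := by
                rw [hsum_eq, abs_mul, abs_of_pos hcpos]
            _ ≤ c * sSup S + A * (2 * ((K : ℝ) * δ)) := by
                exact add_le_add_left (mul_le_mul_of_nonneg_left hrle hcpos.le) _
            _ = Real.sqrt n * sSup S * (K : ℝ) + δ * D := by
                rw [hcdef, hDdef]; ring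
        have hδD : δ * D ≤ ε := by
          have h1 : δ * D ≤ δ * (D + 1) := by nlinarith
          have h2 : δ * (D + 1) = ε := by
            rw [hδdef]
            field_simp
          linarith
        linarith


end Statement18
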